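/- Let H be a nonzero complex Hilbert space and let A be a bounded linear operator on H. Then for every α with 0 ≤ α ≤ 1, w(A)² ≤ ‖√α·Re(A) + √(1 − α)·Im(A)‖² + ‖√(1 − α)·Re(A) − √α·Im(A)‖². -/

import Mathlib

open scoped InnerProductSpace
open ContinuousLinearMap

variable {H : Type*} [NormedAddCommGroup H] [InnerProductSpace ℂ H]
  [CompleteSpace H] [Nontrivial H]

/-- The numerical radius of a bounded linear operator. -/
noncomputable def numRad (A : H →L[ℂ] H) : ℝ :=
  ⨆ x : {x : H // ‖x‖ = 1}, ‖⟪A x.1, x.1⟫_ℂ‖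

/-- The Crawford number of a bounded linear operator. -/
noncomputable def crawford (A : H →L[ℂ] H) : ℝ :=
  ⨅ x : {x : H // ‖x‖ = 1}, ‖⟪A x.1, x.1⟫_ℂ‖

/-- The Euclidean operator radius of a pair of bounded linear operators. -/
noncomputable def euclRad (B C : H →L[ℂ] H) : ℝ :=
  ⨆ x : {x : H // ‖x‖ = 1}, Real.sqrt (‖⟪B x.1, x.1⟫_ℂ‖ ^ 2 + ‖⟪C x.1, x.1⟫_ℂ‖ ^ 2)

/-- The absolute value `|A| = (A*A)^(1/2)` of a bounded linear operator. -/
noncomputable def opAbs (A : H →L[ℂ] H) : H →L[ℂ] H := CFC.sqrt (adjoint A * A)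

/-- The real part `Re(A) = (A + A*)/2` of a bounded linear operator. -/
noncomputable def reOp (A : H →L[ℂ] H) : H →L[ℂ] H := (2 : ℂ)⁻¹ • (A + adjoint A)

/-- The imaginary part `Im(A) = (A - A*)/(2i)` of a bounded linear operator. -/
noncomputable def imOp (A : H →L[ℂ] H) : H →L[ℂ] H := (2 * Complex.I)⁻¹ • (A - adjoint A)

lemma inner_reOp (A : H →L[ℂ] H) (x : H) :
    ⟪(reOp A) x, x⟫_ℂ = ((⟪A x, x⟫_ℂ).re : ℂ) := by
  have h : ⟪(adjoint A) x, x⟫_ℂ = starRingEnd ℂ ⟪A x, x⟫_ℂ := by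
    rw [ContinuousLinearMap.adjoint_inner_left, ← inner_conj_symm]
  simp only [reOp, ContinuousLinearMap.smul_apply, ContinuousLinearMap.add_apply,
    inner_smul_left, inner_add_left, h, Complex.add_conj]
  norm_num [Complex.ext_iff]
  ring

lemma inner_imOp (A : H →L[ℂ] H) (x : H) :
    ⟪(imOp A) x, x⟫_ℂ = (-(⟪A x, x⟫_ℂ).im : ℂ) := by
  have h : ⟪(adjoint A) x, x⟫_ℂ = starRingEnd ℂ ⟪A x, x⟫_ℂ := by
    rw [ContinuousLinearMap.adjoint_inner_left, ← inner_conj_symm]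
  simp only [imOp, ContinuousLinearMap.smul_apply, ContinuousLinearMap.sub_apply,
    inner_smul_left, inner_sub_left, h, Complex.sub_conj]
  simp [Complex.ext_iff]

theorem stmt15 (A : H →L[ℂ] H) (α : ℝ) (h0 : 0 ≤ α) (h1 : α ≤ 1) :
    (numRad A) ^ 2 ≤
      ‖Real.sqrt α • reOp A + Real.sqrt (1 - α) • imOp A‖ ^ 2
        + ‖Real.sqrt (1 - α) • reOp A - Real.sqrt α • imOp A‖ ^ 2 := by
  set a := Real.sqrt α with ha
  set b := Real.sqrt (1 - α) with hb
  have ha0 : 0 ≤ a := Real.sqrt_nonneg _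
  have hb0 : 0 ≤ b := Real.sqrt_nonneg _
  have ha2 : a ^ 2 = α := Real.sq_sqrt h0
  have hb2 : b ^ 2 = 1 - α := Real.sq_sqrt (by linarith)
  set B := a • reOp A + b • imOp A with hB
  set C := b • reOp A - a • imOp A with hC
  have hRHS : (0:ℝ) ≤ ‖B‖ ^ 2 + ‖C‖ ^ 2 := by positivity
  obtain ⟨x0, hx0⟩ := NormedSpace.sphere_nonempty (E := H) (x := (0:H)) (r := 1) |>.mpr zero_le_one
  haveI : Nonempty {x : H // ‖x‖ = 1} :=
    ⟨⟨x0, by simpa using mem_sphere_zero_iff_norm.mp hx0⟩⟩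
  have key : numRad A ≤ Real.sqrt (‖B‖ ^ 2 + ‖C‖ ^ 2) := by
    apply ciSup_le
    rintro ⟨x, hx⟩
    set z := ⟪A x, x⟫_ℂ with hz
    have hBx : ⟪B x, x⟫_ℂ = ((a * z.re + b * (-z.im) : ℝ) : ℂ) := by
      rw [hB, ContinuousLinearMap.add_apply, ContinuousLinearMap.smul_apply,
        ContinuousLinearMap.smul_apply, RCLike.real_smul_eq_coe_smul (K := ℂ) a,
        RCLike.real_smul_eq_coe_smul (K := ℂ) b, inner_add_left, inner_smul_real_left,
        inner_smul_real_left, inner_reOp, inner_imOp, ← hz]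
      push_cast [Complex.real_smul]; ring
    have hCx : ⟪C x, x⟫_ℂ = ((b * z.re - a * (-z.im) : ℝ) : ℂ) := by
      rw [hC, ContinuousLinearMap.sub_apply, ContinuousLinearMap.smul_apply,
        ContinuousLinearMap.smul_apply, RCLike.real_smul_eq_coe_smul (K := ℂ) a,
        RCLike.real_smul_eq_coe_smul (K := ℂ) b, inner_sub_left, inner_smul_real_left,
        inner_smul_real_left, inner_reOp, inner_imOp, ← hz]
      push_cast [Complex.real_smul]; ring
    have hid : ‖z‖ ^ 2 = ‖⟪B x, x⟫_ℂ‖ ^ 2 + ‖⟪C x, x⟫_ℂ‖ ^ 2 := by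
      rw [hBx, hCx, Complex.norm_real, Complex.norm_real, Real.norm_eq_abs,
        Real.norm_eq_abs, sq_abs, sq_abs, Complex.sq_norm,
        Complex.normSq_apply]
      nlinarith [ha2, hb2]
    have hBb : ‖⟪B x, x⟫_ℂ‖ ≤ ‖B‖ := by
      calc ‖⟪B x, x⟫_ℂ‖ ≤ ‖B x‖ * ‖x‖ := norm_inner_le_norm _ _
        _ ≤ ‖B‖ * ‖x‖ * ‖x‖ := by
            have := B.le_opNorm x; nlinarith [norm_nonneg x]
        _ = ‖B‖ := by rw [hx]; ring
    have hCb : ‖⟪C x, x⟫_ℂ‖ ≤ ‖C‖ := by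
      calc ‖⟪C x, x⟫_ℂ‖ ≤ ‖C x‖ * ‖x‖ := norm_inner_le_norm _ _
        _ ≤ ‖C‖ * ‖x‖ * ‖x‖ := by
            have := C.le_opNorm x; nlinarith [norm_nonneg x]
        _ = ‖C‖ := by rw [hx]; ring
    have hfin : ‖z‖ ^ 2 ≤ ‖B‖ ^ 2 + ‖C‖ ^ 2 := by
      rw [hid]
      have h1 := pow_le_pow_left₀ (norm_nonneg _) hBb 2
      have h2 := pow_le_pow_left₀ (norm_nonneg _) hCb 2
      linarith
    calc ‖z‖ = Real.sqrt (‖z‖ ^ 2) := (Real.sqrt_sq (norm_nonneg _)).symm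
      _ ≤ Real.sqrt (‖B‖ ^ 2 + ‖C‖ ^ 2) := Real.sqrt_le_sqrt hfin
  have hnn : 0 ≤ numRad A := Real.iSup_nonneg (fun x => norm_nonneg _)
  calc (numRad A) ^ 2 ≤ Real.sqrt (‖B‖ ^ 2 + ‖C‖ ^ 2) ^ 2 :=
        pow_le_pow_left₀ hnn key 2
    _ = ‖B‖ ^ 2 + ‖C‖ ^ 2 := Real.sq_sqrt hRHS
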